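/- Almost sure convergence of quadratic forms of empirical residuals in a Hilbert space: let ℋ be a separable real Hilbert space with orthonormal basis {e_k : k∈ℕ}, let δ′>0, and let ε be an ℋ-valued random variable with E‖ε‖²<∞; set W_{2,j,k} := E[⟨ε,e_j⟩⟨ε,e_k⟩]. Let (ε̂_{n,i})_{1≤i≤n, n∈ℕ} be a triangular array of ℋ-valued random variables such that, almost surely: n^{-1}Σ_{i=1}^n ‖ε̂_{n,i}‖² → E‖ε‖² = Σ_k W_{2,k,k}, limsup_n n^{-1}Σ_{i=1}^n ‖ε̂_{n,i}‖^{2+δ′} < ∞, and n^{-1}Σ_{i=1}^n ⟨ε̂_{n,i},e_j⟩⟨ε̂_{n,i},e_k⟩ → W_{2,j,k} for every pair j,k∈ℕ. Then for every v = Σ_k γ_k e_k ∈ ℋ, n^{-1}Σ_{i=1}^n ⟨ε̂_{n,i},v⟩² → Σ_{j,k∈ℕ} γ_j γ_k W_{2,j,k} almost surely. -/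

import Mathlib

open MeasureTheory Filter
open scoped ENNReal Topology RealInnerProductSpace

/-- Pointwise bound on the difference of squared inner products. -/
lemma inner_sq_diff_le {H : Type} [NormedAddCommGroup H] [InnerProductSpace ℝ H]
    (x u w : H) : |⟪x, u⟫ ^ 2 - ⟪x, w⟫ ^ 2| ≤ ‖x‖ ^ 2 * (‖u - w‖ * (‖u‖ + ‖w‖)) := by
  have h1 : |⟪x, u⟫ - ⟪x, w⟫| ≤ ‖x‖ * ‖u - w‖ := by
    rw [← inner_sub_right]; exact abs_real_inner_le_norm x (u - w)
  have h2 : |⟪x, u⟫| ≤ ‖x‖ * ‖u‖ := abs_real_inner_le_norm x u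
  have h3 : |⟪x, w⟫| ≤ ‖x‖ * ‖w‖ := abs_real_inner_le_norm x w
  have key : ⟪x, u⟫ ^ 2 - ⟪x, w⟫ ^ 2 = (⟪x, u⟫ - ⟪x, w⟫) * (⟪x, u⟫ + ⟪x, w⟫) := by ring
  rw [key, abs_mul]
  have h4 : |⟪x, u⟫ + ⟪x, w⟫| ≤ ‖x‖ * ‖u‖ + ‖x‖ * ‖w‖ :=
    (abs_add_le _ _).trans (add_le_add h2 h3)
  calc |⟪x, u⟫ - ⟪x, w⟫| * |⟪x, u⟫ + ⟪x, w⟫|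
      ≤ (‖x‖ * ‖u - w‖) * (‖x‖ * ‖u‖ + ‖x‖ * ‖w‖) := by
        apply mul_le_mul h1 h4 (abs_nonneg _)
        positivity
    _ = ‖x‖ ^ 2 * (‖u - w‖ * (‖u‖ + ‖w‖)) := by ring

/-- **Almost sure convergence of quadratic forms of empirical residuals in a Hilbert
space**: if a.s. `n⁻¹Σᵢ‖ε̂_{n,i}‖² → E‖ε‖² = Σ_k W_{k,k}`, the `(2+δ')`-th empirical
moments stay bounded, and `n⁻¹Σᵢ⟨ε̂_{n,i},e_j⟩⟨ε̂_{n,i},e_k⟩ → W_{j,k}` for every `j,k`,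
then for every `v = Σ_k γ_k e_k ∈ ℋ`,
`n⁻¹Σᵢ⟨ε̂_{n,i},v⟩² → Σ_{j,k} γ_j γ_k W_{j,k}` almost surely. -/
theorem quadratic_forms_empirical_residuals
    {H : Type} [NormedAddCommGroup H] [InnerProductSpace ℝ H] [CompleteSpace H]
    (e : HilbertBasis ℕ ℝ H)
    {Ω : Type} [MeasurableSpace Ω] (μ : Measure Ω) [IsProbabilityMeasure μ]
    (δ' : ℝ) (hδ' : 0 < δ')
    (ε : Ω → H) (hε2 : Integrable (fun ω => ‖ε ω‖ ^ 2) μ)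
    (W : ℕ → ℕ → ℝ)
    (hW : ∀ j k, W j k = ∫ ω, ⟪ε ω, e j⟫ * ⟪ε ω, e k⟫ ∂μ)
    (hWsum : HasSum (fun k => W k k) (∫ ω, ‖ε ω‖ ^ 2 ∂μ))
    (ehat : ℕ → ℕ → Ω → H)
    (hae : ∀ᵐ ω ∂μ,
      Tendsto (fun n : ℕ => (n : ℝ)⁻¹ * ∑ i ∈ Finset.Icc 1 n, ‖ehat n i ω‖ ^ 2)
          atTop (𝓝 (∫ ω', ‖ε ω'‖ ^ 2 ∂μ)) ∧
      IsBoundedUnder (· ≤ ·) atTop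
        (fun n : ℕ => (n : ℝ)⁻¹ * ∑ i ∈ Finset.Icc 1 n, ‖ehat n i ω‖ ^ (2 + δ')) ∧
      ∀ j k : ℕ,
        Tendsto (fun n : ℕ => (n : ℝ)⁻¹ *
            ∑ i ∈ Finset.Icc 1 n, ⟪ehat n i ω, e j⟫ * ⟪ehat n i ω, e k⟫)
          atTop (𝓝 (W j k)))
    (v : H) :
    ∀ᵐ ω ∂μ,
      Tendsto (fun n : ℕ => (n : ℝ)⁻¹ * ∑ i ∈ Finset.Icc 1 n, ⟪ehat n i ω, v⟫ ^ 2)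
        atTop (𝓝 (∑' (j : ℕ), ∑' (k : ℕ), ⟪v, e j⟫ * ⟪v, e k⟫ * W j k)) := by
  classical
  set γ : ℕ → ℝ := fun k => ⟪v, e k⟫ with hγdef
  -- Step 1: Cauchy–Schwarz bounds for `W`, obtained from the (nonempty) a.e. set.
  obtain ⟨ω₀, hω₀⟩ := hae.exists
  obtain ⟨-, -, h3₀⟩ := hω₀
  have hWdiag : ∀ j, 0 ≤ W j j := by
    intro j
    refine ge_of_tendsto' (h3₀ j j) fun n => ?_
    have h1 : (0:ℝ) ≤ (n : ℝ)⁻¹ := by positivity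
    have h2 : (0:ℝ) ≤ ∑ i ∈ Finset.Icc 1 n, ⟪ehat n i ω₀, e j⟫ * ⟪ehat n i ω₀, e j⟫ :=
      Finset.sum_nonneg fun i _ => mul_self_nonneg _
    exact mul_nonneg h1 h2
  have hWcs : ∀ j k, (W j k) ^ 2 ≤ W j j * W k k := by
    intro j k
    refine le_of_tendsto_of_tendsto' ((h3₀ j k).pow 2) ((h3₀ j j).mul (h3₀ k k))
      (fun n => ?_)
    have hcs := Finset.sum_mul_sq_le_sq_mul_sq (Finset.Icc 1 n)
      (fun i => ⟪ehat n i ω₀, e j⟫) (fun i => ⟪ehat n i ω₀, e k⟫)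
    have e1 : ∑ i ∈ Finset.Icc 1 n, ⟪ehat n i ω₀, e j⟫ * ⟪ehat n i ω₀, e j⟫ =
        ∑ i ∈ Finset.Icc 1 n, ⟪ehat n i ω₀, e j⟫ ^ 2 :=
      Finset.sum_congr rfl fun i _ => (sq _).symm
    have e2 : ∑ i ∈ Finset.Icc 1 n, ⟪ehat n i ω₀, e k⟫ * ⟪ehat n i ω₀, e k⟫ =
        ∑ i ∈ Finset.Icc 1 n, ⟪ehat n i ω₀, e k⟫ ^ 2 :=
      Finset.sum_congr rfl fun i _ => (sq _).symm
    calc ((n : ℝ)⁻¹ * ∑ i ∈ Finset.Icc 1 n, ⟪ehat n i ω₀, e j⟫ * ⟪ehat n i ω₀, e k⟫) ^ 2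
        = ((n : ℝ)⁻¹) ^ 2 * (∑ i ∈ Finset.Icc 1 n, ⟪ehat n i ω₀, e j⟫ * ⟪ehat n i ω₀, e k⟫) ^ 2 := by
          ring
      _ ≤ ((n : ℝ)⁻¹) ^ 2 * ((∑ i ∈ Finset.Icc 1 n, ⟪ehat n i ω₀, e j⟫ ^ 2) *
            ∑ i ∈ Finset.Icc 1 n, ⟪ehat n i ω₀, e k⟫ ^ 2) := by
          apply mul_le_mul_of_nonneg_left hcs; positivity
      _ = ((n : ℝ)⁻¹ * ∑ i ∈ Finset.Icc 1 n, ⟪ehat n i ω₀, e j⟫ * ⟪ehat n i ω₀, e j⟫) *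
            ((n : ℝ)⁻¹ * ∑ i ∈ Finset.Icc 1 n, ⟪ehat n i ω₀, e k⟫ * ⟪ehat n i ω₀, e k⟫) := by
          rw [e1, e2]; ring
  have hWabs : ∀ j k, |W j k| ≤ Real.sqrt (W j j) * Real.sqrt (W k k) := by
    intro j k
    rw [← Real.sqrt_sq_eq_abs, ← Real.sqrt_mul (hWdiag j)]
    exact Real.sqrt_le_sqrt (hWcs j k)
  -- Step 2: summability of the double series.
  have hγ2 : Summable (fun k => γ k ^ 2) := by
    have := (e.hasSum_inner_mul_inner v v).summable
    refine this.congr fun k => ?_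
    simp [hγdef, real_inner_comm, sq]
  have hWd : Summable (fun k => W k k) := hWsum.summable
  have hb : Summable (fun k => |γ k| * Real.sqrt (W k k)) := by
    refine Summable.of_nonneg_of_le (fun k => by positivity)
      (fun k => ?_) ((hγ2.add hWd).div_const 2)
    have h := Real.sq_sqrt (hWdiag k)
    have h2 := sq_abs (γ k)
    nlinarith [sq_nonneg (|γ k| - Real.sqrt (W k k))]
  have hu : Summable (fun p : ℕ × ℕ => γ p.1 * γ p.2 * W p.1 p.2) := by
    refine Summable.of_norm_bounded
      (hb.mul_of_nonneg hb (fun k => by positivity) (fun k => by positivity))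
      (fun p => ?_)
    have := hWabs p.1 p.2
    calc ‖γ p.1 * γ p.2 * W p.1 p.2‖ = |γ p.1| * |γ p.2| * |W p.1 p.2| := by
          simp [abs_mul]
      _ ≤ |γ p.1| * |γ p.2| * (Real.sqrt (W p.1 p.1) * Real.sqrt (W p.2 p.2)) := by
          apply mul_le_mul_of_nonneg_left this; positivity
      _ = (|γ p.1| * Real.sqrt (W p.1 p.1)) * (|γ p.2| * Real.sqrt (W p.2 p.2)) := by ring
  set L : ℝ := ∑' (j : ℕ), ∑' (k : ℕ), γ j * γ k * W j k with hLdef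
  have hLeq : L = ∑' p : ℕ × ℕ, γ p.1 * γ p.2 * W p.1 p.2 := by
    rw [hLdef, Summable.tsum_prod' hu fun j => (hu.prod_factor j)]
  -- partial square sums converge to `L`
  have hLsq : Tendsto (fun K : ℕ => ∑ j ∈ Finset.range K, ∑ k ∈ Finset.range K,
      γ j * γ k * W j k) atTop (𝓝 L) := by
    rw [hLeq]
    have hmono : Monotone (fun K : ℕ => Finset.range K ×ˢ Finset.range K) := by
      intro a b hab
      exact Finset.product_subset_product (Finset.range_subset_range.2 hab)
        (Finset.range_subset_range.2 hab)
    have hmem : ∀ p : ℕ × ℕ, ∃ K : ℕ, p ∈ Finset.range K ×ˢ Finset.range K := by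
      intro p
      exact ⟨max p.1 p.2 + 1, Finset.mem_product.2
        ⟨Finset.mem_range.2 (Nat.lt_succ_of_le (le_max_left _ _)),
         Finset.mem_range.2 (Nat.lt_succ_of_le (le_max_right _ _))⟩⟩
    have := hu.hasSum.comp (tendsto_atTop_finset_of_monotone hmono hmem)
    refine this.congr fun K => ?_
    simp [Finset.sum_product]
  -- Step 3: convergence of truncations of `v`.
  have hvsum : HasSum (fun k => γ k • e k) v := by
    have := e.hasSum_repr v
    refine this.congr_fun fun k => ?_
    rw [e.repr_apply_apply, hγdef, real_inner_comm]
  have hvK : Tendsto (fun K : ℕ => ‖v - ∑ k ∈ Finset.range K, γ k • e k‖) atTop (𝓝 0) := by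
    have h := (tendsto_const_nhds (x := v)).sub hvsum.tendsto_sum_nat
    have := h.norm
    simpa using this
  -- Step 4: the a.e. statement.
  filter_upwards [hae] with ω hω
  obtain ⟨h1, -, h3⟩ := hω
  set S0 : ℝ := ∫ ω', ‖ε ω'‖ ^ 2 ∂μ with hS0
  have hS0nn : 0 ≤ S0 := by
    rw [hS0]; exact integral_nonneg fun ω' => by positivity
  set C : ℝ := S0 + 1 with hCdef
  have hCpos : 0 < C := by rw [hCdef]; linarith
  rw [Metric.tendsto_nhds]
  intro η hη
  -- eventual bound on empirical second moments
  have hsC : ∀ᶠ n : ℕ in atTop,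
      (n : ℝ)⁻¹ * ∑ i ∈ Finset.Icc 1 n, ‖ehat n i ω‖ ^ 2 ≤ C := by
    refine h1.eventually (eventually_le_nhds ?_)
    rw [hCdef]; linarith
  -- choose a truncation level K
  have hd : 0 < η / 3 / ((2 * ‖v‖ + 1) * C) := by positivity
  have hKev : ∀ᶠ K : ℕ in atTop,
      ‖v - ∑ k ∈ Finset.range K, γ k • e k‖ < min 1 (η / 3 / ((2 * ‖v‖ + 1) * C)) ∧
      |∑ j ∈ Finset.range K, ∑ k ∈ Finset.range K, γ j * γ k * W j k - L| < η / 3 := by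
    have e1 := hvK.eventually (eventually_lt_nhds (lt_min one_pos hd))
    have e2 : ∀ᶠ K : ℕ in atTop,
        |∑ j ∈ Finset.range K, ∑ k ∈ Finset.range K, γ j * γ k * W j k - L| < η / 3 := by
      have := hLsq.sub (tendsto_const_nhds (x := L))
      rw [sub_self] at this
      have := this.abs
      rw [abs_zero] at this
      exact this.eventually (eventually_lt_nhds (by linarith))
    exact e1.and e2
  obtain ⟨K, hK1, hK2⟩ := hKev.exists
  set vK : H := ∑ k ∈ Finset.range K, γ k • e k with hvKdef
  set c0 : ℝ := ‖v - vK‖ with hc0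
  have hc0nn : 0 ≤ c0 := norm_nonneg _
  have hc01 : c0 < 1 := lt_of_lt_of_le hK1 (min_le_left _ _)
  have hc0d : c0 < η / 3 / ((2 * ‖v‖ + 1) * C) := lt_of_lt_of_le hK1 (min_le_right _ _)
  have hvKnorm : ‖vK‖ ≤ ‖v‖ + 1 := by
    calc ‖vK‖ = ‖v - (v - vK)‖ := by rw [sub_sub_cancel]
      _ ≤ ‖v‖ + ‖v - vK‖ := norm_sub_le _ _
      _ ≤ ‖v‖ + 1 := by rw [← hc0] at *; linarith
  set LK : ℝ := ∑ j ∈ Finset.range K, ∑ k ∈ Finset.range K, γ j * γ k * W j k with hLK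
  -- convergence of the truncated empirical quadratic form
  have hrw : ∀ n : ℕ, (n : ℝ)⁻¹ * ∑ i ∈ Finset.Icc 1 n, ⟪ehat n i ω, vK⟫ ^ 2 =
      ∑ j ∈ Finset.range K, ∑ k ∈ Finset.range K, γ j * γ k *
        ((n : ℝ)⁻¹ * ∑ i ∈ Finset.Icc 1 n, ⟪ehat n i ω, e j⟫ * ⟪ehat n i ω, e k⟫) := by
    intro n
    have hip : ∀ x : H, ⟪x, vK⟫ = ∑ k ∈ Finset.range K, γ k * ⟪x, e k⟫ := by
      intro x
      rw [hvKdef, inner_sum]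
      exact Finset.sum_congr rfl fun k _ => real_inner_smul_right x (e k) (γ k)
    have hsq : ∀ x : H, ⟪x, vK⟫ ^ 2 = ∑ j ∈ Finset.range K, ∑ k ∈ Finset.range K,
        γ j * γ k * (⟪x, e j⟫ * ⟪x, e k⟫) := by
      intro x
      rw [sq, hip, Finset.sum_mul_sum]
      exact Finset.sum_congr rfl fun j _ => Finset.sum_congr rfl fun k _ => by ring
    simp only [hsq]
    have swap : ∑ i ∈ Finset.Icc 1 n, ∑ j ∈ Finset.range K, ∑ k ∈ Finset.range K,
        γ j * γ k * (⟪ehat n i ω, e j⟫ * ⟪ehat n i ω, e k⟫) =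
        ∑ j ∈ Finset.range K, ∑ k ∈ Finset.range K, ∑ i ∈ Finset.Icc 1 n,
        γ j * γ k * (⟪ehat n i ω, e j⟫ * ⟪ehat n i ω, e k⟫) := by
      rw [Finset.sum_comm]
      exact Finset.sum_congr rfl fun j _ => Finset.sum_comm
    rw [swap]
    simp only [Finset.mul_sum]
    exact Finset.sum_congr rfl fun j _ => Finset.sum_congr rfl fun k _ =>
      Finset.sum_congr rfl fun i _ => by ring
  have hbtend : Tendsto (fun n : ℕ => (n : ℝ)⁻¹ * ∑ i ∈ Finset.Icc 1 n,
      ⟪ehat n i ω, vK⟫ ^ 2) atTop (𝓝 LK) := by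
    have := tendsto_finset_sum (Finset.range K) fun j (_ : j ∈ Finset.range K) =>
      tendsto_finset_sum (Finset.range K) fun k (_ : k ∈ Finset.range K) =>
        ((h3 j k).const_mul (γ j * γ k))
    exact Tendsto.congr (fun n => (hrw n).symm) this
  -- final estimate
  have hKC : (0:ℝ) < (2 * ‖v‖ + 1) * C := by positivity
  have hc0C : c0 * ((2 * ‖v‖ + 1) * C) < η / 3 := (lt_div_iff₀ hKC).1 hc0d
  filter_upwards [hsC, Metric.tendsto_nhds.1 hbtend (η / 3) (by linarith)] with n hs hbn
  rw [Real.dist_eq] at hbn ⊢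
  set a : ℝ := (n : ℝ)⁻¹ * ∑ i ∈ Finset.Icc 1 n, ⟪ehat n i ω, v⟫ ^ 2 with hadef
  set b : ℝ := (n : ℝ)⁻¹ * ∑ i ∈ Finset.Icc 1 n, ⟪ehat n i ω, vK⟫ ^ 2 with hbdef
  have habd : |a - b| ≤ c0 * (2 * ‖v‖ + 1) * C := by
    have hsplit : a - b = (n : ℝ)⁻¹ * ∑ i ∈ Finset.Icc 1 n,
        (⟪ehat n i ω, v⟫ ^ 2 - ⟪ehat n i ω, vK⟫ ^ 2) := by
      rw [hadef, hbdef, Finset.sum_sub_distrib]; ring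
    have hterm : ∀ i ∈ Finset.Icc 1 n, |⟪ehat n i ω, v⟫ ^ 2 - ⟪ehat n i ω, vK⟫ ^ 2| ≤
        ‖ehat n i ω‖ ^ 2 * (c0 * (2 * ‖v‖ + 1)) := by
      intro i _
      refine (inner_sq_diff_le (ehat n i ω) v vK).trans ?_
      have h1 : ‖v‖ + ‖vK‖ ≤ 2 * ‖v‖ + 1 := by linarith
      have h2 : ‖v - vK‖ * (‖v‖ + ‖vK‖) ≤ c0 * (2 * ‖v‖ + 1) := by
        rw [← hc0]
        exact mul_le_mul_of_nonneg_left h1 hc0nn |>.trans_eq rfl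
      exact mul_le_mul_of_nonneg_left h2 (by positivity)
    have hsum : |∑ i ∈ Finset.Icc 1 n, (⟪ehat n i ω, v⟫ ^ 2 - ⟪ehat n i ω, vK⟫ ^ 2)| ≤
        (∑ i ∈ Finset.Icc 1 n, ‖ehat n i ω‖ ^ 2) * (c0 * (2 * ‖v‖ + 1)) := by
      refine (Finset.abs_sum_le_sum_abs _ _).trans ?_
      rw [Finset.sum_mul]
      exact Finset.sum_le_sum hterm
    calc |a - b| = (n : ℝ)⁻¹ * |∑ i ∈ Finset.Icc 1 n,
          (⟪ehat n i ω, v⟫ ^ 2 - ⟪ehat n i ω, vK⟫ ^ 2)| := by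
          rw [hsplit, abs_mul, abs_of_nonneg (by positivity : (0:ℝ) ≤ (n : ℝ)⁻¹)]
      _ ≤ (n : ℝ)⁻¹ * ((∑ i ∈ Finset.Icc 1 n, ‖ehat n i ω‖ ^ 2) * (c0 * (2 * ‖v‖ + 1))) := by
          apply mul_le_mul_of_nonneg_left hsum; positivity
      _ = ((n : ℝ)⁻¹ * ∑ i ∈ Finset.Icc 1 n, ‖ehat n i ω‖ ^ 2) * (c0 * (2 * ‖v‖ + 1)) := by
          ring
      _ ≤ C * (c0 * (2 * ‖v‖ + 1)) := by
          apply mul_le_mul_of_nonneg_right hs; positivity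
      _ = c0 * (2 * ‖v‖ + 1) * C := by ring
  have htri : |a - L| ≤ |a - b| + |b - LK| + |LK - L| := by
    calc |a - L| ≤ |a - b| + |b - L| := abs_sub_le a b L
      _ ≤ |a - b| + (|b - LK| + |LK - L|) := by linarith [abs_sub_le b LK L]
      _ = |a - b| + |b - LK| + |LK - L| := by ring
  have hfin : c0 * (2 * ‖v‖ + 1) * C < η / 3 := by
    calc c0 * (2 * ‖v‖ + 1) * C = c0 * ((2 * ‖v‖ + 1) * C) := by ring
      _ < η / 3 := hc0C
  refine lt_of_le_of_lt htri ?_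
  linarith [lt_of_le_of_lt habd hfin, hbn, hK2]
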